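/- For 1 ≤ i ≤ d, the normalized volume of the hypersimplex Δ_{d,i} (i.e., d! times its d-dimensional Euclidean-induced lattice volume in the hyperplane Σ x_t = i) equals the Eulerian number A(d,i). -/

import Mathlib

open scoped Classical BigOperators

noncomputable section

/-- Descent set of a permutation of `Fin d`. -/
def descents (d : ℕ) (π : Equiv.Perm (Fin d)) : Finset (Fin d) :=
  Finset.univ.filter (fun t => ∃ h : (t : ℕ) + 1 < d, π ⟨(t : ℕ) + 1, h⟩ < π t)

/-- Eulerian number `A(d,j)`: permutations of `{1,…,d}` with `j-1` descents. -/
def A (d j : ℕ) : ℕ :=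
  (Finset.univ.filter (fun π : Equiv.Perm (Fin d) => (descents d π).card = j - 1)).card

/-- `C s n m`: number of weak compositions of `m` into `n` parts, each part at most `s`. -/
def C (s n : ℕ) (m : ℤ) : ℕ :=
  Fintype.card {v : Fin n → Fin (s + 1) // ∑ t, ((v t : ℕ) : ℤ) = m}

/-- The hypersimplex `Δ_{d,j} ⊆ ℝ^{d+1}`. -/
def Δ (d j : ℕ) : Set (Fin (d + 1) → ℝ) :=
  {x | ∑ t, x t = j ∧ ∀ t, 0 ≤ x t ∧ x t ≤ 1}

/-- The lattice translate `v + Δ_{d,j}`. -/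
def latTranslate (d : ℕ) (v : Fin (d + 1) → ℤ) (j : ℕ) : Set (Fin (d + 1) → ℝ) :=
  {x | (fun t => x t - (v t : ℝ)) ∈ Δ d j}

/-- The 0/1 indicator vector of a subset `T ⊆ [d+1]`. -/
def ind (d : ℕ) (T : Finset (Fin (d + 1))) : Fin (d + 1) → ℝ :=
  fun t => if t ∈ T then 1 else 0

/-- `F` is a face of `P`: empty, or the set of maximizers of a linear functional over `P`. -/
def IsFace {n : ℕ} (P F : Set (Fin n → ℝ)) : Prop :=
  F = ∅ ∨ ∃ f : (Fin n → ℝ) →ₗ[ℝ] ℝ, F = {x | x ∈ P ∧ ∀ y ∈ P, f y ≤ f x}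

/-- The `r`-dilate `rΔ_{d,i}`. -/
def rdil (d r i : ℕ) : Set (Fin (d + 1) → ℝ) :=
  {x | ∑ t, x t = (i : ℝ) * r ∧ ∀ t, 0 ≤ x t ∧ x t ≤ r}

/-- The set `𝒞(s, n, m)` of lattice weak compositions of `m` into `n` parts each `≤ s`. -/
def Comp (s n : ℕ) (m : ℤ) : Set (Fin n → ℤ) :=
  {v | (∀ t, 0 ≤ v t ∧ v t ≤ s) ∧ ∑ t, v t = m}
open MeasureTheory Pointwise
open scoped ENNReal

namespace Stmt16Aux

/-- A level set of a nonzero linear functional is Lebesgue-null. -/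
lemma null_of_linear {n : ℕ} (f : (Fin n → ℝ) →ₗ[ℝ] ℝ) (hf : f ≠ 0) (c : ℝ) :
    volume {w : Fin n → ℝ | f w = c} = 0 := by
  obtain ⟨x0, hx0⟩ : ∃ x0, f x0 ≠ 0 := by
    by_contra h
    push_neg at h
    exact hf (LinearMap.ext fun x => by simpa using h x)
  have hker : LinearMap.ker f ≠ ⊤ := by
    intro h
    exact hf (LinearMap.ker_eq_top.mp h)
  set x1 : Fin n → ℝ := (c / f x0) • x0 with hx1
  have hfx1 : f x1 = c := by
    rw [hx1, _root_.map_smul, smul_eq_mul, div_mul_cancel₀ _ hx0]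
  have hset : {w : Fin n → ℝ | f w = c} = x1 +ᵥ (LinearMap.ker f : Set (Fin n → ℝ)) := by
    ext w
    simp only [Set.mem_setOf_eq, Set.mem_vadd_set, SetLike.mem_coe, LinearMap.mem_ker]
    constructor
    · intro hw
      exact ⟨w - x1, by rw [map_sub, hw, hfx1, sub_self], by simp [vadd_eq_add]⟩
    · rintro ⟨y, hy, rfl⟩
      simp [vadd_eq_add, map_add, hy, hfx1]
  rw [hset, measure_vadd]
  exact Measure.addHaar_submodule volume _ hker

lemma null_eval {n : ℕ} (t : Fin n) (c : ℝ) : volume {w : Fin n → ℝ | w t = c} = 0 := by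
  have := null_of_linear (LinearMap.proj (R := ℝ) (φ := fun _ : Fin n => ℝ) t)
    (by
      intro h
      have := LinearMap.congr_fun h (Pi.single t 1)
      simp [LinearMap.proj_apply] at this) c
  simpa [LinearMap.proj_apply] using this

lemma null_pair {n : ℕ} {a b : Fin n} (h : a ≠ b) :
    volume {w : Fin n → ℝ | w a = w b} = 0 := by
  have := null_of_linear
    (LinearMap.proj (R := ℝ) (φ := fun _ : Fin n => ℝ) a -
      LinearMap.proj (R := ℝ) (φ := fun _ : Fin n => ℝ) b)
    (by
      intro hz
      have := LinearMap.congr_fun hz (Pi.single a 1)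
      simp [LinearMap.proj_apply, Pi.single_apply, h.symm] at this) 0
  have hs : {w : Fin n → ℝ | w a = w b} =
      {w : Fin n → ℝ | (LinearMap.proj (R := ℝ) (φ := fun _ : Fin n => ℝ) a -
        LinearMap.proj (R := ℝ) (φ := fun _ : Fin n => ℝ) b) w = 0} := by
    ext w; simp [sub_eq_zero, LinearMap.proj_apply]
  rw [hs]; exact this

lemma null_sum {n : ℕ} (hn : 0 < n) (c : ℝ) :
    volume {w : Fin n → ℝ | ∑ t, w t = c} = 0 := by
  have := null_of_linear (∑ t : Fin n, LinearMap.proj (R := ℝ) (φ := fun _ : Fin n => ℝ) t)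
    (by
      intro hz
      have := LinearMap.congr_fun hz (fun _ => 1)
      simp [LinearMap.proj_apply] at this
      omega) c
  have hs : {w : Fin n → ℝ | ∑ t, w t = c} =
      {w : Fin n → ℝ | (∑ t : Fin n, LinearMap.proj (R := ℝ) (φ := fun _ : Fin n => ℝ) t) w = c} := by
    ext w; simp [LinearMap.proj_apply, LinearMap.sum_apply]
  rw [hs]; exact this

/-- The set of non-injective tuples. -/
def badInj (n : ℕ) : Set (Fin n → ℝ) := ⋃ (a : Fin n) (b : Fin n) (_ : a ≠ b), {w | w a = w b}

lemma null_badInj {n : ℕ} : volume (badInj n) = 0 :=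
  measure_iUnion_null fun a => measure_iUnion_null fun b => measure_iUnion_null fun h =>
    null_pair h

lemma mem_badInj_of_not_inj {n : ℕ} {w : Fin n → ℝ} (h : ¬ Function.Injective w) :
    w ∈ badInj n := by
  rw [Function.not_injective_iff] at h
  obtain ⟨a, b, hab, hne⟩ := h
  exact Set.mem_iUnion.2 ⟨a, Set.mem_iUnion.2 ⟨b, Set.mem_iUnion.2 ⟨hne, hab⟩⟩⟩

/-- half-open unit cube -/
def cubeH (n : ℕ) : Set (Fin n → ℝ) := {w | ∀ t, 0 ≤ w t ∧ w t < 1}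

lemma measurableSet_cubeH (n : ℕ) : MeasurableSet (cubeH n) := by
  rw [cubeH, Set.setOf_forall]
  refine MeasurableSet.iInter fun t => ?_
  rw [Set.setOf_and]
  exact (measurableSet_le measurable_const (measurable_pi_apply t)).inter
    (measurableSet_lt (measurable_pi_apply t) measurable_const)

lemma volume_cubeH (n : ℕ) : volume (cubeH n) = 1 := by
  have : cubeH n = Set.pi Set.univ (fun _ : Fin n => Set.Ico (0:ℝ) 1) := by
    ext w; simp [cubeH, Set.mem_pi, Set.mem_Ico]
  rw [this, volume_pi_pi]
  simp

/-- descent pattern of a permutation of `Fin (m+1)`, as a subset of `Fin m` -/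
def pat (m : ℕ) (σ : Equiv.Perm (Fin (m+1))) : Finset (Fin m) :=
  Finset.univ.filter fun j => σ j.succ < σ j.castSucc

/-- order cell of a permutation -/
def cell (m : ℕ) (σ : Equiv.Perm (Fin (m+1))) : Set (Fin (m+1) → ℝ) :=
  cubeH (m+1) ∩ {w | ∀ j : Fin m, w (σ j.castSucc) < w (σ j.succ)}

lemma measurableSet_cell (m : ℕ) (σ : Equiv.Perm (Fin (m+1))) : MeasurableSet (cell m σ) := by
  refine (measurableSet_cubeH _).inter ?_
  rw [Set.setOf_forall]
  exact MeasurableSet.iInter fun j =>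
    measurableSet_lt (measurable_pi_apply _) (measurable_pi_apply _)

lemma strictMono_of_mem_cell {m : ℕ} {σ : Equiv.Perm (Fin (m+1))} {w : Fin (m+1) → ℝ}
    (hw : w ∈ cell m σ) : StrictMono (w ∘ σ) :=
  Fin.strictMono_iff_lt_succ.2 fun j => hw.2 j

lemma lt_iff_of_mem_cell {m : ℕ} {σ : Equiv.Perm (Fin (m+1))} {w : Fin (m+1) → ℝ}
    (hw : w ∈ cell m σ) (a b : Fin (m+1)) : w a < w b ↔ σ.symm a < σ.symm b := by
  have hs := strictMono_of_mem_cell hw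
  conv_lhs => rw [← σ.apply_symm_apply a, ← σ.apply_symm_apply b]
  exact hs.lt_iff_lt

/-- cells are permuted copies of each other -/
lemma volume_cell (m : ℕ) (σ : Equiv.Perm (Fin (m+1))) :
    volume (cell m σ) = volume (cell m 1) := by
  have hmp := volume_measurePreserving_piCongrLeft (fun _ : Fin (m+1) => ℝ) σ.symm
  set T := MeasurableEquiv.piCongrLeft (fun _ : Fin (m+1) => ℝ) σ.symm with hT
  have hTapp : ∀ (x : Fin (m+1) → ℝ) (j : Fin (m+1)), T x j = x (σ j) := by
    intro x j
    have := MeasurableEquiv.piCongrLeft_apply_apply (β := fun _ : Fin (m+1) => ℝ) σ.symm x (σ j)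
    simpa using this
  have hpre : cell m σ = T ⁻¹' (cell m 1) := by
    ext w
    simp only [Set.mem_preimage, cell, Set.mem_inter_iff, Set.mem_setOf_eq, cubeH]
    constructor
    · rintro ⟨h1, h2⟩
      refine ⟨fun t => by rw [hTapp]; exact h1 _, fun j => by rw [hTapp, hTapp]; simpa using h2 j⟩
    · rintro ⟨h1, h2⟩
      refine ⟨fun t => ?_, fun j => ?_⟩
      · have := h1 (σ.symm t); rwa [hTapp, σ.apply_symm_apply] at this
      · have := h2 j; rw [hTapp, hTapp] at this; simpa using this
  rw [hpre, hmp.measure_preimage (measurableSet_cell m 1).nullMeasurableSet]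

lemma pairwise_disjoint_cells (m : ℕ) :
    Pairwise fun σ τ : Equiv.Perm (Fin (m+1)) => Disjoint (cell m σ) (cell m τ) := by
  intro σ τ hne
  rw [Set.disjoint_left]
  intro w hwσ hwτ
  apply hne
  have hρ : StrictMono fun j => σ.symm (τ j) := by
    intro a b hab
    have h1 : w (τ a) < w (τ b) := (lt_iff_of_mem_cell hwτ _ _).2 (by simpa using hab)
    have := (lt_iff_of_mem_cell hwσ (τ a) (τ b)).1 h1
    exact this
  set ρ : Equiv.Perm (Fin (m+1)) := τ.trans σ.symm with hρdef
  have hρ' : StrictMono (ρ : Fin (m+1) → Fin (m+1)) := hρ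
  have hid : ∀ j, ρ j = j := by
    intro j
    have := Fin.coe_orderIso_apply (StrictMono.orderIsoOfSurjective _ hρ' ρ.surjective) j
    rw [StrictMono.coe_orderIsoOfSurjective] at this
    exact Fin.ext this
  apply Equiv.ext
  intro j
  have h2 := hid j
  simp only [hρdef, Equiv.trans_apply] at h2
  have h3 := congrArg σ h2
  rw [σ.apply_symm_apply] at h3
  exact h3.symm

lemma cube_subset_cells (m : ℕ) :
    cubeH (m+1) ⊆ (⋃ σ : Equiv.Perm (Fin (m+1)), cell m σ) ∪ badInj (m+1) := by
  intro w hw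
  by_cases hinj : Function.Injective w
  · left
    refine Set.mem_iUnion.2 ⟨Tuple.sort w, hw, fun j => ?_⟩
    have hmono : Monotone (w ∘ Tuple.sort w) := Tuple.monotone_sort w
    have hsm : StrictMono (w ∘ Tuple.sort w) :=
      hmono.strictMono_of_injective (hinj.comp (Tuple.sort w).injective)
    exact hsm (Fin.castSucc_lt_succ : j.castSucc < j.succ)
  · right; exact mem_badInj_of_not_inj hinj

lemma volume_iUnion_cells (m : ℕ) :
    volume (⋃ σ : Equiv.Perm (Fin (m+1)), cell m σ) = 1 := by
  apply le_antisymm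
  · have h1 : (⋃ σ : Equiv.Perm (Fin (m+1)), cell m σ) ⊆ cubeH (m+1) :=
      Set.iUnion_subset fun σ => Set.inter_subset_left
    have := measure_mono (μ := volume) h1
    rwa [volume_cubeH] at this
  · have h1 : (1:ℝ≥0∞) ≤ volume ((⋃ σ : Equiv.Perm (Fin (m+1)), cell m σ) ∪ badInj (m+1)) := by
      rw [← volume_cubeH (m+1)]
      exact measure_mono (cube_subset_cells m)
    have h2 := measure_union_le (μ := volume) (⋃ σ : Equiv.Perm (Fin (m+1)), cell m σ) (badInj (m+1))
    rw [null_badInj, add_zero] at h2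
    exact le_trans h1 h2

lemma factorial_mul_volume_cell (m : ℕ) :
    ((m+1).factorial : ℝ≥0∞) * volume (cell m 1) = 1 := by
  have h := volume_iUnion_cells m
  rw [measure_iUnion (pairwise_disjoint_cells m) (measurableSet_cell m)] at h
  calc ((m+1).factorial : ℝ≥0∞) * volume (cell m 1)
      = ∑ σ : Equiv.Perm (Fin (m+1)), volume (cell m 1) := by
        rw [Finset.sum_const, nsmul_eq_mul]
        congr 1
        rw [Finset.card_univ, Fintype.card_perm, Fintype.card_fin]
    _ = ∑ σ : Equiv.Perm (Fin (m+1)), volume (cell m σ) := by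
        exact Finset.sum_congr rfl fun σ _ => (volume_cell m σ).symm
    _ = 1 := by rw [← h, tsum_fintype]

/-- descent-pattern cell in the cube -/
def Yset (m : ℕ) (D : Finset (Fin m)) : Set (Fin (m+1) → ℝ) :=
  cubeH (m+1) ∩
    {w | ∀ j : Fin m, if j ∈ D then w j.succ < w j.castSucc else w j.castSucc ≤ w j.succ}

lemma measurableSet_Yset (m : ℕ) (D : Finset (Fin m)) : MeasurableSet (Yset m D) := by
  refine (measurableSet_cubeH _).inter ?_
  rw [Set.setOf_forall]
  refine MeasurableSet.iInter fun j => ?_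
  by_cases h : j ∈ D <;> simp only [h, if_true, if_false]
  · exact measurableSet_lt (measurable_pi_apply _) (measurable_pi_apply _)
  · exact measurableSet_le (measurable_pi_apply _) (measurable_pi_apply _)

/-- the integer translation vector attached to a descent set -/
def cvec (m : ℕ) (D : Finset (Fin m)) : Fin (m+1) → ℝ :=
  fun t => ((D.filter fun j : Fin m => (j : ℕ) < (t : ℕ)).card : ℝ)

lemma cvec_zero (m : ℕ) (D : Finset (Fin m)) : cvec m D 0 = 0 := by
  simp [cvec]

lemma cvec_succ (m : ℕ) (D : Finset (Fin m)) (j : Fin m) :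
    cvec m D j.succ = cvec m D j.castSucc + if j ∈ D then 1 else 0 := by
  have hsplit : (D.filter fun l : Fin m => (l : ℕ) < ((j.succ : Fin (m+1)) : ℕ)) =
      (D.filter fun l : Fin m => (l : ℕ) < ((j.castSucc : Fin (m+1)) : ℕ)) ∪
        (D.filter fun l : Fin m => l = j) := by
    ext l
    simp only [Finset.mem_filter, Finset.mem_union, Fin.val_succ, Fin.coe_castSucc, Fin.ext_iff]
    constructor
    · rintro ⟨hl, h2⟩
      rcases Nat.lt_succ_iff_lt_or_eq.mp h2 with h | h
      · exact Or.inl ⟨hl, h⟩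
      · exact Or.inr ⟨hl, h⟩
    · rintro (⟨hl, h2⟩ | ⟨hl, h2⟩)
      · exact ⟨hl, by omega⟩
      · exact ⟨hl, by omega⟩
  have hdisj : Disjoint (D.filter fun l : Fin m => (l : ℕ) < ((j.castSucc : Fin (m+1)) : ℕ))
      (D.filter fun l : Fin m => l = j) := by
    rw [Finset.disjoint_left]
    intro l hl hr
    simp only [Finset.mem_filter, Fin.coe_castSucc] at hl hr
    rw [hr.2] at hl
    omega
  simp only [cvec]
  rw [hsplit, Finset.card_union_of_disjoint hdisj, Finset.filter_eq']
  by_cases h : j ∈ D <;> simp [h]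

lemma cvec_last (m : ℕ) (D : Finset (Fin m)) : cvec m D (Fin.last m) = D.card := by
  have h : (D.filter fun l : Fin m => (l : ℕ) < ((Fin.last m : Fin (m+1)) : ℕ)) = D := by
    apply Finset.filter_true_of_mem
    intro l _
    simpa using l.isLt
  simp only [cvec]
  rw [h]

/-- The partial-sum coordinates region. -/
def Uset (m i : ℕ) : Set (Fin (m+1) → ℝ) :=
  {u | (0 ≤ u 0 ∧ u 0 < 1) ∧
    (∀ j : Fin m, 0 ≤ u j.succ - u j.castSucc ∧ u j.succ - u j.castSucc < 1) ∧
    ((i:ℝ) - 1 ≤ u (Fin.last m) ∧ u (Fin.last m) < i)}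

lemma measurableSet_Uset (m i : ℕ) : MeasurableSet (Uset m i) := by
  rw [Uset]
  rw [Set.setOf_and]
  refine MeasurableSet.inter ?_ ?_
  · rw [Set.setOf_and]
    exact (measurableSet_le measurable_const
        (measurable_pi_apply (0 : Fin (m+1)))).inter
      (measurableSet_lt (measurable_pi_apply (0 : Fin (m+1))) measurable_const)
  rw [Set.setOf_and]
  refine MeasurableSet.inter ?_ ?_
  · rw [Set.setOf_forall]
    refine MeasurableSet.iInter fun j => ?_
    rw [Set.setOf_and]
    exact (measurableSet_le measurable_const
        ((measurable_pi_apply (j.succ : Fin (m+1))).sub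
          (measurable_pi_apply (j.castSucc : Fin (m+1))))).inter
      (measurableSet_lt ((measurable_pi_apply (j.succ : Fin (m+1))).sub
          (measurable_pi_apply (j.castSucc : Fin (m+1)))) measurable_const)
  · rw [Set.setOf_and]
    exact (measurableSet_le measurable_const
        (measurable_pi_apply (Fin.last m))).inter
      (measurableSet_lt (measurable_pi_apply (Fin.last m)) measurable_const)

lemma vadd_mem_Uset {m i : ℕ} (hi1 : 1 ≤ i) {D : Finset (Fin m)} (hD : D.card = i - 1)
    {w : Fin (m+1) → ℝ} (hw : w ∈ Yset m D) : cvec m D +ᵥ w ∈ Uset m i := by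
  obtain ⟨hcube, hpat⟩ := hw
  have hcast : ((i - 1 : ℕ) : ℝ) = (i : ℝ) - 1 := by
    push_cast [Nat.cast_sub hi1]; ring
  refine ⟨?_, fun j => ?_, ?_⟩
  · have := hcube 0
    simpa [vadd_eq_add, Pi.add_apply, cvec_zero] using this
  · have hc := cvec_succ m D j
    have h1 := hcube j.succ
    have h2 := hcube j.castSucc
    have hp := hpat j
    simp only [vadd_eq_add, Pi.add_apply]
    by_cases h : j ∈ D <;> simp only [h, if_true, if_false] at hp hc <;>
      constructor <;> rw [hc] <;> nlinarith [h1.1, h1.2, h2.1, h2.2]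
  · have := hcube (Fin.last m)
    simp only [vadd_eq_add, Pi.add_apply, cvec_last, hD, hcast]
    constructor <;> nlinarith [this.1, this.2]

lemma Uset_subset_union {m i : ℕ} (hi1 : 1 ≤ i) :
    Uset m i ⊆ ⋃ D ∈ (Finset.univ.filter fun D : Finset (Fin m) => D.card = i - 1),
      (cvec m D +ᵥ Yset m D) := by
  intro u hu
  obtain ⟨h0, hdiff, hlast⟩ := hu
  set D : Finset (Fin m) := Finset.univ.filter fun j => ⌊u j.castSucc⌋ < ⌊u j.succ⌋ with hDdef
  have hfloor : ∀ t, (cvec m D t : ℝ) = (⌊u t⌋ : ℝ) := by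
    intro t
    induction t using Fin.induction with
    | zero =>
      rw [cvec_zero]
      have : ⌊u 0⌋ = 0 := by
        rw [Int.floor_eq_zero_iff]
        exact ⟨h0.1, h0.2⟩
      rw [this]; simp
    | succ j ih =>
      have hd := hdiff j
      have h1 : ⌊u j.castSucc⌋ ≤ ⌊u j.succ⌋ := Int.floor_le_floor (by linarith [hd.1])
      have h2 : ⌊u j.succ⌋ ≤ ⌊u j.castSucc⌋ + 1 := by
        have : u j.succ < u j.castSucc + 1 := by linarith [hd.2]
        have := Int.floor_le_floor this.le
        rwa [Int.floor_add_one] at this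
      rw [cvec_succ, ih]
      by_cases h : j ∈ D
      · simp only [h, if_true]
        have : ⌊u j.castSucc⌋ < ⌊u j.succ⌋ := by
          simpa [hDdef] using h
        have : ⌊u j.succ⌋ = ⌊u j.castSucc⌋ + 1 := by omega
        rw [this]; push_cast; ring
      · simp only [h, if_false]
        have : ¬ ⌊u j.castSucc⌋ < ⌊u j.succ⌋ := by
          simpa [hDdef] using h
        have : ⌊u j.succ⌋ = ⌊u j.castSucc⌋ := by omega
        rw [this]; ring
  have hDcard : D.card = i - 1 := by
    have h1 : (cvec m D (Fin.last m) : ℝ) = (⌊u (Fin.last m)⌋ : ℝ) := hfloor _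
    have h2 : ⌊u (Fin.last m)⌋ = (i : ℤ) - 1 := by
      rw [Int.floor_eq_iff]
      constructor <;> push_cast <;> linarith [hlast.1, hlast.2]
    rw [cvec_last, h2] at h1
    have : (D.card : ℤ) = (i : ℤ) - 1 := by exact_mod_cast h1
    omega
  have hmem : u ∈ cvec m D +ᵥ Yset m D := by
    rw [Set.mem_vadd_set]
    refine ⟨fun t => u t - cvec m D t, ⟨⟨fun t => ?_, fun j => ?_⟩, ?_⟩⟩
    · show 0 ≤ u t - cvec m D t ∧ u t - cvec m D t < 1
      rw [hfloor t]
      constructor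
      · linarith [Int.floor_le (u t)]
      · linarith [Int.lt_floor_add_one (u t)]
    · have hd := hdiff j
      have hc := cvec_succ m D j
      by_cases h : j ∈ D <;> simp only [h, if_true, if_false] <;> rw [hc] <;>
        simp only [h, if_true, if_false]
      · have h1 : (cvec m D j.castSucc : ℝ) = ⌊u j.castSucc⌋ := hfloor _
        have h2 : (cvec m D j.succ : ℝ) = ⌊u j.succ⌋ := hfloor _
        have h3 : ⌊u j.castSucc⌋ < ⌊u j.succ⌋ := by simpa [hDdef] using h
        -- w succ < w castSucc
        have h4 : ⌊u j.succ⌋ = ⌊u j.castSucc⌋ + 1 := by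
          have ha : ⌊u j.castSucc⌋ ≤ ⌊u j.succ⌋ := Int.floor_le_floor (by linarith [hd.1])
          have hb : u j.succ < u j.castSucc + 1 := by linarith [hd.2]
          have hc' := Int.floor_le_floor hb.le
          rw [Int.floor_add_one] at hc'
          omega
        rw [hc] at h2
        simp only [h, if_true] at h2
        rw [h1] at h2 ⊢
        have : (⌊u j.succ⌋ : ℝ) = (⌊u j.castSucc⌋ : ℝ) + 1 := by exact_mod_cast h4
        nlinarith [hd.2, h2, this]
      · linarith [hd.1]
    · funext t
      simp [vadd_eq_add]
  exact Set.mem_iUnion₂.mpr ⟨D, by simp [hDcard], hmem⟩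

/-- partial sum linear map -/
def Lsum (m : ℕ) : (Fin (m+1) → ℝ) →ₗ[ℝ] (Fin (m+1) → ℝ) where
  toFun y := fun t => ∑ j ∈ Finset.Iic t, y j
  map_add' y z := by funext t; simp [Finset.sum_add_distrib]
  map_smul' c y := by funext t; simp [Finset.mul_sum]

lemma Iic_zero (m : ℕ) : Finset.Iic (0 : Fin (m+1)) = {0} := by
  ext k; simp [Fin.le_zero_iff]

lemma Iic_last (m : ℕ) : Finset.Iic (Fin.last m) = Finset.univ := by
  ext k; simp [Fin.le_last]

lemma succ_not_mem_Iic (m : ℕ) (j : Fin m) :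
    (j.succ : Fin (m+1)) ∉ Finset.Iic (j.castSucc : Fin (m+1)) := by
  simp only [Finset.mem_Iic, Fin.le_def, Fin.val_succ, Fin.coe_castSucc]
  omega

lemma Iic_succ (m : ℕ) (j : Fin m) :
    Finset.Iic (j.succ : Fin (m+1)) =
      insert (j.succ : Fin (m+1)) (Finset.Iic (j.castSucc : Fin (m+1))) := by
  ext k
  simp only [Finset.mem_Iic, Finset.mem_insert, Fin.le_def, Fin.ext_iff, Fin.val_succ,
    Fin.coe_castSucc]
  omega

lemma Lsum_zero (m : ℕ) (y : Fin (m+1) → ℝ) : Lsum m y 0 = y 0 := by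
  simp [Lsum, Iic_zero]

lemma Lsum_succ_sub (m : ℕ) (y : Fin (m+1) → ℝ) (j : Fin m) :
    Lsum m y j.succ - Lsum m y j.castSucc = y j.succ := by
  simp only [Lsum, LinearMap.coe_mk, AddHom.coe_mk]
  rw [Iic_succ, Finset.sum_insert (succ_not_mem_Iic m j)]
  ring

lemma Lsum_last (m : ℕ) (y : Fin (m+1) → ℝ) : Lsum m y (Fin.last m) = ∑ t, y t := by
  simp [Lsum, Iic_last]

lemma det_Lsum (m : ℕ) : LinearMap.det (Lsum m) = 1 := by
  rw [← LinearMap.det_toMatrix' (Lsum m)]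
  have hM : LinearMap.toMatrix' (Lsum m) =
      Matrix.of (fun t s : Fin (m+1) => if s ≤ t then (1:ℝ) else 0) := by
    ext t s
    rw [LinearMap.toMatrix'_apply]
    show (∑ j ∈ Finset.Iic t, (Pi.single s (1:ℝ) : Fin (m+1) → ℝ) j) = _
    simp only [Pi.single_apply]
    rw [Finset.sum_ite_eq' (Finset.Iic t) s (fun _ => (1:ℝ))]
    simp [Finset.mem_Iic]
  rw [hM]
  rw [Matrix.det_of_lowerTriangular _ (by
    intro a b hab
    have : a < b := hab
    simp only [Matrix.of_apply]
    rw [if_neg]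
    exact not_le_of_gt this)]
  simp

/-- cells lie in the pattern cell of their inverse descent set -/
lemma cell_subset_Yset {m : ℕ} {D : Finset (Fin m)} {σ : Equiv.Perm (Fin (m+1))}
    (hσ : pat m σ.symm = D) : cell m σ ⊆ Yset m D := by
  intro w hw
  refine ⟨hw.1, fun j => ?_⟩
  have hiff := lt_iff_of_mem_cell hw
  by_cases h : j ∈ D <;> simp only [h, if_true, if_false]
  · rw [hiff]
    have h2 : j ∈ pat m σ.symm := by rw [hσ]; exact h
    simpa [pat] using h2
  · have h2 : j ∉ pat m σ.symm := by rw [hσ]; exact h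
    have hnot : ¬ σ.symm j.succ < σ.symm j.castSucc := by simpa [pat] using h2
    by_contra hc
    push_neg at hc
    exact hnot ((hiff _ _).1 hc)

lemma Yset_subset {m : ℕ} (D : Finset (Fin m)) :
    Yset m D ⊆ (⋃ σ ∈ (Finset.univ.filter
        fun σ : Equiv.Perm (Fin (m+1)) => pat m σ.symm = D), cell m σ) ∪ badInj (m+1) := by
  intro w hw
  by_cases hinj : Function.Injective w
  · left
    set σ := Tuple.sort w with hσdef
    have hsm : StrictMono (w ∘ σ) :=
      (Tuple.monotone_sort w).strictMono_of_injective (hinj.comp σ.injective)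
    have hcell : w ∈ cell m σ := ⟨hw.1, fun j => hsm (Fin.castSucc_lt_succ : j.castSucc < j.succ)⟩
    have hpat : pat m σ.symm = D := by
      ext j
      have hiff := lt_iff_of_mem_cell hcell j.succ j.castSucc
      simp only [pat, Finset.mem_filter, Finset.mem_univ, true_and]
      rw [← hiff]
      have hp := hw.2 j
      by_cases h : j ∈ D <;> simp only [h, if_true, if_false] at hp
      · simp only [h, iff_true]; exact hp
      · simp only [h, iff_false, not_lt]; exact hp
    exact Set.mem_iUnion₂.mpr ⟨σ, by simp [hpat], hcell⟩
  · right; exact mem_badInj_of_not_inj hinj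

lemma volume_Yset (m : ℕ) (D : Finset (Fin m)) :
    volume (Yset m D) = ((Finset.univ.filter
        fun σ : Equiv.Perm (Fin (m+1)) => pat m σ.symm = D).card : ℝ≥0∞) *
      volume (cell m 1) := by
  set K := Finset.univ.filter fun σ : Equiv.Perm (Fin (m+1)) => pat m σ.symm = D with hK
  have hsub : (⋃ σ ∈ K, cell m σ) ⊆ Yset m D := by
    refine Set.iUnion₂_subset fun σ hσ => cell_subset_Yset ?_
    simpa [hK] using hσ
  have hdisj : Set.PairwiseDisjoint (↑K : Set (Equiv.Perm (Fin (m+1)))) (cell m) :=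
    (pairwise_disjoint_cells m).set_pairwise _
  have hsum : volume (⋃ σ ∈ K, cell m σ) = ∑ σ ∈ K, volume (cell m σ) :=
    measure_biUnion_finset hdisj fun σ _ => measurableSet_cell m σ
  have hval : ∑ σ ∈ K, volume (cell m σ) = (K.card : ℝ≥0∞) * volume (cell m 1) := by
    rw [Finset.sum_congr rfl fun σ _ => volume_cell m σ, Finset.sum_const, nsmul_eq_mul]
  apply le_antisymm
  · have h1 := measure_mono (μ := volume) (Yset_subset D)
    have h2 := measure_union_le (μ := volume) (⋃ σ ∈ K, cell m σ) (badInj (m+1))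
    rw [null_badInj, add_zero] at h2
    rw [← hval, ← hsum]
    exact le_trans h1 h2
  · rw [← hval, ← hsum]
    exact measure_mono hsub

/-- translated pattern cells are disjoint -/
lemma translates_pairwiseDisjoint (m i : ℕ) :
    Set.PairwiseDisjoint
      (↑(Finset.univ.filter fun D : Finset (Fin m) => D.card = i - 1) :
        Set (Finset (Fin m)))
      (fun D => cvec m D +ᵥ Yset m D) := by
  intro D _ D' _ hne
  rw [Function.onFun, Set.disjoint_left]
  intro u h1 h2
  apply hne
  rw [Set.mem_vadd_set] at h1 h2
  obtain ⟨w, hw, hwu⟩ := h1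
  obtain ⟨w', hw', hwu'⟩ := h2
  have hvec : ∀ t, cvec m D t = cvec m D' t := by
    intro t
    have e1 : u t = cvec m D t + w t := by rw [← hwu]; simp [vadd_eq_add]
    have e2 : u t = cvec m D' t + w' t := by rw [← hwu']; simp [vadd_eq_add]
    have hb := hw.1 t
    have hb' := hw'.1 t
    simp only [cvec] at e1 e2 ⊢
    set c1 := (D.filter fun j : Fin m => (j:ℕ) < (t:ℕ)).card with hc1
    set c2 := (D'.filter fun j : Fin m => (j:ℕ) < (t:ℕ)).card with hc2
    have l1 : (c1 : ℝ) < (c2 : ℝ) + 1 := by linarith [hb.1, hb.2, hb'.1, hb'.2]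
    have l2 : (c2 : ℝ) < (c1 : ℝ) + 1 := by linarith [hb.1, hb.2, hb'.1, hb'.2]
    have n1 : c1 < c2 + 1 := by exact_mod_cast l1
    have n2 : c2 < c1 + 1 := by exact_mod_cast l2
    have hceq : c1 = c2 := by omega
    rw [hceq]
  ext j
  have hs := hvec j.succ
  rw [cvec_succ m D j, cvec_succ m D' j, hvec j.castSucc] at hs
  have hite : (if j ∈ D then (1:ℝ) else 0) = (if j ∈ D' then (1:ℝ) else 0) := by linarith
  rcases Classical.em (j ∈ D) with h | h <;> rcases Classical.em (j ∈ D') with h' | h'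
  · simp [h, h']
  · exfalso; rw [if_pos h, if_neg h'] at hite; norm_num at hite
  · exfalso; rw [if_neg h, if_pos h'] at hite; norm_num at hite
  · simp [h, h']

lemma measurableSet_vadd {n : ℕ} {s : Set (Fin n → ℝ)} (hs : MeasurableSet s) (c : Fin n → ℝ) :
    MeasurableSet (c +ᵥ s) := by
  have h : c +ᵥ s = (fun x : Fin n → ℝ => x - c) ⁻¹' s := by
    ext x
    rw [Set.mem_vadd_set_iff_neg_vadd_mem]
    simp [vadd_eq_add, sub_eq_neg_add]
  rw [h]
  exact (measurable_id.sub measurable_const) hs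

lemma volume_Uset (m i : ℕ) (hi1 : 1 ≤ i) :
    volume (Uset m i) = ∑ D ∈ (Finset.univ.filter fun D : Finset (Fin m) => D.card = i - 1),
      volume (Yset m D) := by
  have hUeq : Uset m i = ⋃ D ∈ (Finset.univ.filter fun D : Finset (Fin m) => D.card = i - 1),
      (cvec m D +ᵥ Yset m D) := by
    apply Set.Subset.antisymm (Uset_subset_union hi1)
    refine Set.iUnion₂_subset fun D hD => ?_
    intro u hu
    rw [Set.mem_vadd_set] at hu
    obtain ⟨w, hw, rfl⟩ := hu
    have hDc : D.card = i - 1 := by simpa using hD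
    exact vadd_mem_Uset hi1 hDc hw
  rw [hUeq, measure_biUnion_finset (translates_pairwiseDisjoint m i)
    (fun D _ => measurableSet_vadd (measurableSet_Yset m D) (cvec m D))]
  exact Finset.sum_congr rfl fun D _ => measure_vadd _ _ _

lemma descents_eq_image (m : ℕ) (π : Equiv.Perm (Fin (m+1))) :
    descents (m+1) π = (pat m π).image Fin.castSucc := by
  ext t
  simp only [descents, pat, Finset.mem_filter, Finset.mem_univ, true_and, Finset.mem_image]
  constructor
  · rintro ⟨h, hlt⟩
    have htm : (t : ℕ) < m := by omega
    refine ⟨⟨(t : ℕ), htm⟩, ?_, ?_⟩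
    · have e1 : ((⟨(t:ℕ), htm⟩ : Fin m).succ : Fin (m+1)) = ⟨(t:ℕ)+1, h⟩ := by
        simp [Fin.ext_iff]
      have e2 : ((⟨(t:ℕ), htm⟩ : Fin m).castSucc : Fin (m+1)) = t := by
        simp [Fin.ext_iff]
      rw [e1, e2]
      exact hlt
    · simp [Fin.ext_iff]
  · rintro ⟨j, hj, rfl⟩
    have h : ((j.castSucc : Fin (m+1)) : ℕ) + 1 < m + 1 := by
      simp only [Fin.coe_castSucc]
      omega
    refine ⟨h, ?_⟩
    have e1 : (⟨((j.castSucc : Fin (m+1)) : ℕ)+1, h⟩ : Fin (m+1)) = j.succ := by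
      simp [Fin.ext_iff]
    rw [e1]
    exact hj

lemma descents_card (m : ℕ) (π : Equiv.Perm (Fin (m+1))) :
    (descents (m+1) π).card = (pat m π).card := by
  rw [descents_eq_image, Finset.card_image_of_injective _ (Fin.castSucc_injective m)]

lemma A_eq_count (m i : ℕ) :
    A (m+1) i = (Finset.univ.filter
      fun σ : Equiv.Perm (Fin (m+1)) => (pat m σ.symm).card = i - 1).card := by
  rw [A]
  have h1 : (Finset.univ.filter
        fun π : Equiv.Perm (Fin (m+1)) => (descents (m+1) π).card = i-1)
      = Finset.univ.filter fun π : Equiv.Perm (Fin (m+1)) => (pat m π).card = i-1 := by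
    apply Finset.filter_congr
    intro π _
    simp [descents_card]
  rw [h1]
  have hinv : ∀ π : Equiv.Perm (Fin (m+1)), (π⁻¹ : Equiv.Perm (Fin (m+1))) = π.symm :=
    fun π => rfl
  refine Finset.card_bij' (fun π _ => π⁻¹) (fun σ _ => σ⁻¹) ?_ ?_
    (fun π _ => by simp) (fun σ _ => by simp)
  · intro π hπ
    simp only [Finset.mem_filter, Finset.mem_univ, true_and] at hπ ⊢
    rw [hinv, Equiv.symm_symm]
    exact hπ
  · intro σ hσ
    simp only [Finset.mem_filter, Finset.mem_univ, true_and] at hσ ⊢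
    rw [hinv]
    exact hσ

lemma count_fiberwise (m i : ℕ) :
    ∑ D ∈ (Finset.univ.filter fun D : Finset (Fin m) => D.card = i - 1),
      (Finset.univ.filter fun σ : Equiv.Perm (Fin (m+1)) => pat m σ.symm = D).card
    = A (m+1) i := by
  rw [A_eq_count]
  rw [Finset.card_eq_sum_card_fiberwise
    (f := fun σ : Equiv.Perm (Fin (m+1)) => pat m σ.symm)
    (t := Finset.univ.filter fun D : Finset (Fin m) => D.card = i - 1)
    (fun σ hσ => by
      simp only [Finset.mem_coe, Finset.mem_filter, Finset.mem_univ, true_and] at hσ ⊢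
      exact hσ)]
  apply Finset.sum_congr rfl
  intro D hD
  congr 1
  ext σ
  simp only [Finset.mem_filter, Finset.mem_univ, true_and] at hD ⊢
  constructor
  · intro h; exact ⟨by rw [h]; exact hD, h⟩
  · rintro ⟨hcard, h⟩; exact h

/-- closed projected hypersimplex -/
def Scl (m i : ℕ) : Set (Fin (m+1) → ℝ) :=
  {y | (∀ t, 0 ≤ y t ∧ y t ≤ 1) ∧ ((i:ℝ) - 1 ≤ ∑ t, y t ∧ ∑ t, y t ≤ i)}

/-- half-open version -/
def Sho (m i : ℕ) : Set (Fin (m+1) → ℝ) :=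
  cubeH (m+1) ∩ {y | (i:ℝ) - 1 ≤ ∑ t, y t ∧ ∑ t, y t < i}

lemma image_eq (m i : ℕ) (hi1 : 1 ≤ i) (hid : i ≤ m + 1) :
    ((fun (x : Fin (m+1+1) → ℝ) (t : Fin (m+1)) => x t.castSucc) '' Δ (m+1) i) = Scl m i := by
  ext y
  constructor
  · rintro ⟨x, ⟨hsum, hbd⟩, rfl⟩
    have hs := Fin.sum_univ_castSucc (f := x)
    rw [hsum] at hs
    have hsum2 : ∑ t : Fin (m+1), x t.castSucc = (i:ℝ) - x (Fin.last (m+1)) := by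
      rw [hs]; ring
    refine ⟨fun t => hbd t.castSucc, ?_, ?_⟩
    · show (i:ℝ) - 1 ≤ ∑ t : Fin (m+1), x t.castSucc
      rw [hsum2]; linarith [(hbd (Fin.last (m+1))).2]
    · show ∑ t : Fin (m+1), x t.castSucc ≤ (i:ℝ)
      rw [hsum2]; linarith [(hbd (Fin.last (m+1))).1]
  · rintro ⟨hbd, hs1, hs2⟩
    refine ⟨Fin.snoc y ((i:ℝ) - ∑ t, y t), ⟨?_, ?_⟩, ?_⟩
    · rw [Fin.sum_univ_castSucc]
      simp only [Fin.snoc_castSucc, Fin.snoc_last]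
      ring
    · intro t
      refine Fin.lastCases ?_ ?_ t
      · simp only [Fin.snoc_last]
        constructor <;> linarith
      · intro j
        simp only [Fin.snoc_castSucc]
        exact hbd j
    · funext t
      simp only [Fin.snoc_castSucc]

lemma volume_Scl (m i : ℕ) : volume (Scl m i) = volume (Sho m i) := by
  apply le_antisymm
  · have hsub : Scl m i ⊆ Sho m i ∪ ((⋃ t : Fin (m+1), {y : Fin (m+1) → ℝ | y t = 1}) ∪
        {y : Fin (m+1) → ℝ | ∑ t, y t = (i:ℝ)}) := by
      intro y hy
      obtain ⟨hbd, hs1, hs2⟩ := hy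
      by_cases hsum : ∑ t, y t = (i:ℝ)
      · right; right; exact hsum
      by_cases hone : ∃ t, y t = 1
      · right; left
        obtain ⟨t, ht⟩ := hone
        exact Set.mem_iUnion.2 ⟨t, ht⟩
      push_neg at hone
      left
      exact ⟨fun t => ⟨(hbd t).1, lt_of_le_of_ne (hbd t).2 (hone t)⟩, hs1,
        lt_of_le_of_ne hs2 hsum⟩
    have h0 : volume ((⋃ t : Fin (m+1), {y : Fin (m+1) → ℝ | y t = 1}) ∪
        {y : Fin (m+1) → ℝ | ∑ t, y t = (i:ℝ)}) = 0 := by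
      apply measure_union_null
      · exact measure_iUnion_null fun t => null_eval t 1
      · exact null_sum (Nat.succ_pos m) (i:ℝ)
    calc volume (Scl m i) ≤ _ := measure_mono hsub
      _ ≤ volume (Sho m i) + _ := measure_union_le _ _
      _ = volume (Sho m i) := by rw [h0, add_zero]
  · apply measure_mono
    rintro y ⟨hc, hs1, hs2⟩
    exact ⟨fun t => ⟨(hc t).1, (hc t).2.le⟩, hs1, hs2.le⟩

lemma Sho_eq_preimage (m i : ℕ) : Sho m i = Lsum m ⁻¹' Uset m i := by
  ext y
  simp only [Sho, cubeH, Uset, Set.mem_inter_iff, Set.mem_setOf_eq, Set.mem_preimage]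
  constructor
  · rintro ⟨hc, hs1, hs2⟩
    refine ⟨?_, fun j => ?_, ?_⟩
    · rw [Lsum_zero]; exact hc 0
    · rw [Lsum_succ_sub m y j]; exact hc j.succ
    · rw [Lsum_last]; exact ⟨hs1, hs2⟩
  · rintro ⟨h0, hdd, hl⟩
    rw [Lsum_zero] at h0
    rw [Lsum_last] at hl
    refine ⟨fun t => ?_, hl.1, hl.2⟩
    refine Fin.cases ?_ ?_ t
    · exact h0
    · intro j
      have hj := hdd j
      rw [Lsum_succ_sub m y j] at hj
      exact hj

lemma volume_Sho (m i : ℕ) : volume (Sho m i) = volume (Uset m i) := by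
  rw [Sho_eq_preimage]
  rw [Measure.addHaar_preimage_linearMap volume
    (f := Lsum m) (by rw [det_Lsum]; norm_num) (Uset m i)]
  rw [det_Lsum]
  norm_num

end Stmt16Aux

open MeasureTheory in
/-- Laplace's theorem: the normalized volume of `Δ_{d,i}` is the Eulerian number `A(d,i)`.
The hypersimplex is identified with a full-dimensional body in `ℝ^d` via the
unimodular projection forgetting the last coordinate. -/
theorem stmt16 (d i : ℕ) (hd : 1 ≤ d) (hi1 : 1 ≤ i) (hid : i ≤ d) :
    (d.factorial : ENNReal) *
        volume ((fun x (t : Fin d) => x t.castSucc) '' Δ d i) = A d i := by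

  obtain ⟨m, rfl⟩ : ∃ m, d = m + 1 := ⟨d - 1, by omega⟩
  rw [Stmt16Aux.image_eq m i hi1 hid, Stmt16Aux.volume_Scl, Stmt16Aux.volume_Sho,
    Stmt16Aux.volume_Uset m i hi1]
  have hsum : ∑ D ∈ (Finset.univ.filter fun D : Finset (Fin m) => D.card = i - 1),
      volume (Stmt16Aux.Yset m D)
      = (A (m+1) i : ℝ≥0∞) * volume (Stmt16Aux.cell m 1) := by
    rw [Finset.sum_congr rfl fun D _ => Stmt16Aux.volume_Yset m D, ← Finset.sum_mul]
    congr 1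
    rw [← Nat.cast_sum]
    exact_mod_cast congrArg (Nat.cast (R := ℝ≥0∞)) (Stmt16Aux.count_fiberwise m i)
  rw [hsum, ← mul_assoc, mul_comm ((m+1).factorial : ℝ≥0∞) (A (m+1) i : ℝ≥0∞), mul_assoc,
    Stmt16Aux.factorial_mul_volume_cell m, mul_one]
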